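/- arXiv:2307.05415 — 4 statements merged into one kernel-verified Lean document; each statement's English description precedes it below -/
import Mathlib

section
/- Let β, ε, γ > 0 and let s, e, i, r : ℝ → ℝ be differentiable functions satisfying the normalized SEIR system on [0,∞). If s(0), e(0), i(0), r(0) ∈ [0,1] and s(0) + e(0) + i(0) + r(0) = 1, then for every t ≥ 0 one has s(t), e(t), i(t), r(t) ∈ [0,1] and s(t) + e(t) + i(t) + r(t) = 1; that is, the simplex S = { x ∈ [0,1]⁴ : x₁ + x₂ + x₃ + x₄ = 1 } is positively invariant for the system. -/
set_option maxHeartbeats 1000000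

open Set Filter Topology

/-- If `f` is positive on `[0, t0)`, vanishes at `t0 > 0`, and has positive
derivative at `t0`, we get a contradiction. -/
lemma seir_slope_contra {f : ℝ → ℝ} {t0 d : ℝ} (ht0 : 0 < t0)
    (hder : HasDerivAt f d t0) (hdpos : 0 < d) (hf0 : f t0 = 0)
    (hpos : ∀ t, 0 ≤ t → t < t0 → 0 < f t) : False := by
  have hslope := hasDerivAt_iff_tendsto_slope.mp hder
  have h1 : ∀ᶠ x in 𝓝[≠] t0, 0 < slope f t0 x := hslope (Ioi_mem_nhds hdpos)
  have h2 : ∀ᶠ x in 𝓝[<] t0, 0 < slope f t0 x :=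
    h1.filter_mono (nhdsWithin_mono _ fun x hx => ne_of_lt hx)
  have h3 : Set.Ioo 0 t0 ∈ 𝓝[<] t0 := Ioo_mem_nhdsLT_of_mem ⟨ht0, le_rfl⟩
  obtain ⟨x, hx1, hx2⟩ := (h2.and (eventually_of_mem h3 fun x hx => hx)).exists
  have hfx := hpos x hx2.1.le hx2.2
  have hxt : x - t0 < 0 := by linarith [hx2.2]
  have hsl : slope f t0 x = f x / (x - t0) := by
    simp [slope, hf0, div_eq_inv_mul]
  rw [hsl] at hx1
  rcases div_pos_iff.mp hx1 with ⟨h, h'⟩ | ⟨h, h'⟩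
  · linarith
  · linarith

/-- Barrier lemma: components stay above `-δ exp(K t)` on `[0, T]`. -/
lemma seir_barrier (β ε γ M K δ T : ℝ) (hβ : 0 < β) (hε : 0 < ε) (hγ : 0 < γ)
    (hδ : 0 < δ) (hM : 0 ≤ M) (hK1 : 2 * β * M + 1 ≤ K) (hK2 : ε < K + γ)
    (hK3 : γ < K)
    (hsmall : β * δ * Real.exp (K * T) < 1)
    (s e i r : ℝ → ℝ)
    (hs : ∀ t ∈ Set.Ici (0 : ℝ), HasDerivAt s (-β * s t * i t) t)
    (he : ∀ t ∈ Set.Ici (0 : ℝ), HasDerivAt e (β * s t * i t - ε * e t) t)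
    (hi : ∀ t ∈ Set.Ici (0 : ℝ), HasDerivAt i (ε * e t - γ * i t) t)
    (hr : ∀ t ∈ Set.Ici (0 : ℝ), HasDerivAt r (γ * i t) t)
    (hMs : ∀ t ∈ Set.Icc (0:ℝ) T, |s t| ≤ M) (hMi : ∀ t ∈ Set.Icc (0:ℝ) T, |i t| ≤ M)
    (hs0 : 0 ≤ s 0) (he0 : 0 ≤ e 0) (hi0 : 0 ≤ i 0) (hr0 : 0 ≤ r 0) :
    ∀ t ∈ Set.Icc (0:ℝ) T,
      -(δ * Real.exp (K * t)) < min (min (s t) (e t)) (min (i t) (r t)) := by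
  have hK0 : (1:ℝ) ≤ K := le_trans (by nlinarith) hK1
  -- continuity
  have hcs : ContinuousOn s (Set.Ici 0) := fun u hu =>
    (hs u hu).continuousAt.continuousWithinAt
  have hce : ContinuousOn e (Set.Ici 0) := fun u hu =>
    (he u hu).continuousAt.continuousWithinAt
  have hci : ContinuousOn i (Set.Ici 0) := fun u hu =>
    (hi u hu).continuousAt.continuousWithinAt
  have hcr : ContinuousOn r (Set.Ici 0) := fun u hu =>
    (hr u hu).continuousAt.continuousWithinAt
  set m : ℝ → ℝ := fun t => min (min (s t) (e t)) (min (i t) (r t)) with hm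
  set F : ℝ → ℝ := fun t => m t + δ * Real.exp (K * t) with hF
  have hcF : ContinuousOn F (Set.Icc 0 T) := by
    apply ContinuousOn.add
    · exact (((hcs.mono Icc_subset_Ici_self).inf (hce.mono Icc_subset_Ici_self)).inf
        ((hci.mono Icc_subset_Ici_self).inf (hcr.mono Icc_subset_Ici_self)))
    · exact (continuous_const.mul (Real.continuous_exp.comp (continuous_const.mul
        continuous_id))).continuousOn
  by_contra hcon
  push_neg at hcon
  obtain ⟨t1, ht1, ht1'⟩ := hcon
  -- the "bad" set
  set Z : Set ℝ := Set.Icc 0 T ∩ F ⁻¹' (Set.Iic 0) with hZ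
  have hZne : Z.Nonempty := ⟨t1, ht1, by simp only [Set.mem_preimage, Set.mem_Iic]; dsimp [F]; linarith⟩
  have hZclosed : IsClosed Z := hcF.preimage_isClosed_of_isClosed isClosed_Icc isClosed_Iic
  have hZbdd : BddBelow Z := ⟨0, fun x hx => hx.1.1⟩
  set t0 : ℝ := sInf Z with ht0def
  have ht0Z : t0 ∈ Z := hZclosed.csInf_mem hZne hZbdd
  have ht0mem : t0 ∈ Set.Icc (0:ℝ) T := ht0Z.1
  have hT0 : 0 ≤ T := le_trans ht0mem.1 ht0mem.2
  have hF0 : 0 < F 0 := by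
    dsimp [F, m]
    have : (0:ℝ) ≤ min (min (s 0) (e 0)) (min (i 0) (r 0)) := by
      simp [le_min_iff, hs0, he0, hi0, hr0]
    have hex : Real.exp (K * 0) = 1 := by norm_num
    rw [hex]; linarith
  have ht0pos : 0 < t0 := by
    rcases eq_or_lt_of_le ht0mem.1 with h | h
    · exfalso
      have := ht0Z.2
      simp only [Set.mem_preimage, Set.mem_Iic] at this
      rw [← h] at this; linarith
    · exact h
  -- positivity before t0
  have hbefore : ∀ t, 0 ≤ t → t < t0 → 0 < F t := by
    intro t ht htlt
    by_contra hc
    push_neg at hc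
    have : t ∈ Z := ⟨⟨ht, le_trans htlt.le ht0mem.2⟩, by simpa [Set.mem_Iic] using hc⟩
    have := csInf_le hZbdd this
    linarith
  -- F t0 = 0
  have hFt0le : F t0 ≤ 0 := ht0Z.2
  have hFt0ge : 0 ≤ F t0 := by
    have hcw : ContinuousWithinAt F (Set.Ico 0 t0) t0 :=
      ((hcF t0 ht0mem).mono (fun x hx => ⟨hx.1, le_trans hx.2.le ht0mem.2⟩))
    have hnb : (𝓝[Set.Ico (0:ℝ) t0] t0).NeBot := by
      apply mem_closure_iff_nhdsWithin_neBot.mp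
      rw [closure_Ico (ne_of_lt ht0pos)]
      exact ⟨ht0pos.le, le_rfl⟩
    exact ge_of_tendsto hcw (eventually_nhdsWithin_of_forall fun x hx =>
      (hbefore x hx.1 hx.2).le)
  have hFt0 : F t0 = 0 := le_antisymm hFt0le hFt0ge
  set E : ℝ := Real.exp (K * t0) with hE
  have hEpos : 0 < E := Real.exp_pos _
  have hmt0 : m t0 = -(δ * E) := by dsimp [F] at hFt0; linarith
  -- all components ≥ -δE at t0
  have hall : -(δ * E) ≤ s t0 ∧ -(δ * E) ≤ e t0 ∧ -(δ * E) ≤ i t0 ∧ -(δ * E) ≤ r t0 := by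
    have h1 : m t0 ≤ s t0 := le_trans (min_le_left _ _) (min_le_left _ _)
    have h2 : m t0 ≤ e t0 := le_trans (min_le_left _ _) (min_le_right _ _)
    have h3 : m t0 ≤ i t0 := le_trans (min_le_right _ _) (min_le_left _ _)
    have h4 : m t0 ≤ r t0 := le_trans (min_le_right _ _) (min_le_right _ _)
    rw [hmt0] at h1 h2 h3 h4
    exact ⟨h1, h2, h3, h4⟩
  obtain ⟨hst0, het0, hit0, hrt0⟩ := hall
  have hEbound : E ≤ Real.exp (K * T) := by
    apply Real.exp_le_exp.mpr
    have := ht0mem.2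
    nlinarith
  have hδE : β * δ * E < 1 := by
    have : β * δ * E ≤ β * δ * Real.exp (K * T) := by
      apply mul_le_mul_of_nonneg_left hEbound (by positivity)
    linarith
  have hsb : |s t0| ≤ M := hMs t0 ht0mem
  have hib : |i t0| ≤ M := hMi t0 ht0mem
  have hsb' : s t0 ≤ M := le_trans (le_abs_self _) hsb
  have hib' : i t0 ≤ M := le_trans (le_abs_self _) hib
  -- derivative of the exponential part
  have hlin : HasDerivAt (fun t : ℝ => K * t) K t0 := by
    simpa using (hasDerivAt_id t0).const_mul K
  have hexpder : HasDerivAt (fun t => δ * Real.exp (K * t)) (δ * (E * K)) t0 := by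
    simpa [hE] using hlin.exp.const_mul δ
  have hsmallprod : (β * δ * E) * (δ * E) < δ * E := by nlinarith [mul_pos hδ hEpos]
  have ht0Ici : t0 ∈ Set.Ici (0:ℝ) := ht0mem.1
  -- which component attains the min?
  have hcase : m t0 = s t0 ∨ m t0 = e t0 ∨ m t0 = i t0 ∨ m t0 = r t0 := by
    have h1 : m t0 = min (min (s t0) (e t0)) (min (i t0) (r t0)) := rfl
    rw [h1]
    rcases le_total (min (s t0) (e t0)) (min (i t0) (r t0)) with h | h
    · rw [min_eq_left h]
      rcases le_total (s t0) (e t0) with h' | h'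
      · left; rw [min_eq_left h']
      · right; left; rw [min_eq_right h']
    · rw [min_eq_right h]
      rcases le_total (i t0) (r t0) with h' | h'
      · right; right; left; rw [min_eq_left h']
      · right; right; right; rw [min_eq_right h']
  have hbefore4 : ∀ t, 0 ≤ t → t < t0 →
      -(δ * Real.exp (K * t)) < s t ∧ -(δ * Real.exp (K * t)) < e t ∧
      -(δ * Real.exp (K * t)) < i t ∧ -(δ * Real.exp (K * t)) < r t := by
    intro t ht htlt
    have h := hbefore t ht htlt
    have h' : 0 < min (min (s t) (e t)) (min (i t) (r t)) + δ * Real.exp (K * t) := h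
    have hs' : min (min (s t) (e t)) (min (i t) (r t)) ≤ s t :=
      le_trans (min_le_left _ _) (min_le_left _ _)
    have he' : min (min (s t) (e t)) (min (i t) (r t)) ≤ e t :=
      le_trans (min_le_left _ _) (min_le_right _ _)
    have hi' : min (min (s t) (e t)) (min (i t) (r t)) ≤ i t :=
      le_trans (min_le_right _ _) (min_le_left _ _)
    have hr' : min (min (s t) (e t)) (min (i t) (r t)) ≤ r t :=
      le_trans (min_le_right _ _) (min_le_right _ _)
    exact ⟨by linarith, by linarith, by linarith, by linarith⟩
  have hprod : -(2 * M * (δ * E)) - (δ * E) * (δ * E) ≤ s t0 * i t0 := by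
    nlinarith [mul_nonneg (by linarith : (0:ℝ) ≤ s t0 + δ * E) (by linarith : (0:ℝ) ≤ i t0 + δ * E)]
  rcases hcase with hc | hc | hc | hc
  · -- s hits the barrier
    have hval : s t0 = -(δ * E) := by rw [← hc, hmt0]
    have hder : HasDerivAt (fun t => s t + δ * Real.exp (K * t))
        (-β * s t0 * i t0 + δ * (E * K)) t0 := (hs t0 ht0Ici).add hexpder
    apply seir_slope_contra ht0pos hder ?_ ?_ ?_
    · rw [hval]
      nlinarith [mul_pos hδ hEpos, hsmallprod, mul_le_mul_of_nonneg_left hit0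
        (mul_nonneg (mul_nonneg hβ.le hδ.le) hEpos.le)]
    · show s t0 + δ * E = 0; rw [hval]; ring
    · intro t ht htlt
      have h := (hbefore4 t ht htlt).1
      show 0 < s t + δ * Real.exp (K * t)
      linarith
  · -- e hits the barrier
    have hval : e t0 = -(δ * E) := by rw [← hc, hmt0]
    have hder : HasDerivAt (fun t => e t + δ * Real.exp (K * t))
        (β * s t0 * i t0 - ε * e t0 + δ * (E * K)) t0 := (he t0 ht0Ici).add hexpder
    apply seir_slope_contra ht0pos hder ?_ ?_ ?_
    · rw [hval]
      nlinarith [mul_pos hδ hEpos, hsmallprod, mul_le_mul_of_nonneg_left hprod hβ.le]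
    · show e t0 + δ * E = 0; rw [hval]; ring
    · intro t ht htlt
      have h := (hbefore4 t ht htlt).2.1
      show 0 < e t + δ * Real.exp (K * t)
      linarith
  · -- i hits the barrier
    have hval : i t0 = -(δ * E) := by rw [← hc, hmt0]
    have hder : HasDerivAt (fun t => i t + δ * Real.exp (K * t))
        (ε * e t0 - γ * i t0 + δ * (E * K)) t0 := (hi t0 ht0Ici).add hexpder
    apply seir_slope_contra ht0pos hder ?_ ?_ ?_
    · rw [hval]
      nlinarith [mul_pos hδ hEpos, mul_le_mul_of_nonneg_left het0 hε.le]
    · show i t0 + δ * E = 0; rw [hval]; ring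
    · intro t ht htlt
      have h := (hbefore4 t ht htlt).2.2.1
      show 0 < i t + δ * Real.exp (K * t)
      linarith
  · -- r hits the barrier
    have hval : r t0 = -(δ * E) := by rw [← hc, hmt0]
    have hder : HasDerivAt (fun t => r t + δ * Real.exp (K * t))
        (γ * i t0 + δ * (E * K)) t0 := (hr t0 ht0Ici).add hexpder
    apply seir_slope_contra ht0pos hder ?_ ?_ ?_
    · nlinarith [mul_pos hδ hEpos, mul_le_mul_of_nonneg_left hit0 hγ.le]
    · show r t0 + δ * E = 0; rw [hval]; ring
    · intro t ht htlt
      have h := (hbefore4 t ht htlt).2.2.2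
      show 0 < r t + δ * Real.exp (K * t)
      linarith

/-- **Positive invariance of the simplex for the normalized SEIR model.**
For parameters `β, ε, γ > 0` and differentiable `s, e, i, r : ℝ → ℝ` satisfying
the normalized SEIR system on `[0,∞)`, if the initial data lie in `[0,1]` and
sum to `1`, then for every `t ≥ 0` all components stay in `[0,1]` and their sum
remains `1`: the simplex `S = {x ∈ [0,1]⁴ : ‖x‖₁ = 1}` is positively invariant. -/
theorem seir_simplex_positively_invariant
    (β ε γ : ℝ) (hβ : 0 < β) (hε : 0 < ε) (hγ : 0 < γ)
    (s e i r : ℝ → ℝ)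
    (hs : ∀ t ∈ Set.Ici (0 : ℝ), HasDerivAt s (-β * s t * i t) t)
    (he : ∀ t ∈ Set.Ici (0 : ℝ), HasDerivAt e (β * s t * i t - ε * e t) t)
    (hi : ∀ t ∈ Set.Ici (0 : ℝ), HasDerivAt i (ε * e t - γ * i t) t)
    (hr : ∀ t ∈ Set.Ici (0 : ℝ), HasDerivAt r (γ * i t) t)
    (hs0 : s 0 ∈ Set.Icc (0 : ℝ) 1) (he0 : e 0 ∈ Set.Icc (0 : ℝ) 1)
    (hi0 : i 0 ∈ Set.Icc (0 : ℝ) 1) (hr0 : r 0 ∈ Set.Icc (0 : ℝ) 1)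
    (hsum0 : s 0 + e 0 + i 0 + r 0 = 1) :
    ∀ t ∈ Set.Ici (0 : ℝ),
      s t ∈ Set.Icc (0 : ℝ) 1 ∧ e t ∈ Set.Icc (0 : ℝ) 1 ∧
      i t ∈ Set.Icc (0 : ℝ) 1 ∧ r t ∈ Set.Icc (0 : ℝ) 1 ∧
      s t + e t + i t + r t = 1 := by
  have hcs : ContinuousOn s (Set.Ici 0) := fun u hu =>
    (hs u hu).continuousAt.continuousWithinAt
  have hce : ContinuousOn e (Set.Ici 0) := fun u hu =>
    (he u hu).continuousAt.continuousWithinAt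
  have hci : ContinuousOn i (Set.Ici 0) := fun u hu =>
    (hi u hu).continuousAt.continuousWithinAt
  have hcr : ContinuousOn r (Set.Ici 0) := fun u hu =>
    (hr u hu).continuousAt.continuousWithinAt
  -- sum is constant
  have hsum : ∀ t ∈ Set.Ici (0:ℝ), s t + e t + i t + r t = 1 := by
    intro t ht
    rcases eq_or_lt_of_le (Set.mem_Ici.mp ht) with h | h
    · rw [← h]; exact hsum0
    · have hcont : ContinuousOn (fun u => s u + e u + i u + r u) (Set.Icc 0 t) :=
        (((hcs.add hce).add hci).add hcr).mono Icc_subset_Ici_self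
      have hderiv : ∀ x ∈ Set.Ico (0:ℝ) t,
          HasDerivWithinAt (fun u => s u + e u + i u + r u) 0 (Set.Ici x) x := by
        intro x hx
        have hx' : x ∈ Set.Ici (0:ℝ) := hx.1
        have := (((hs x hx').add (he x hx')).add (hi x hx')).add (hr x hx')
        have h0 : -β * s x * i x + (β * s x * i x - ε * e x) + (ε * e x - γ * i x) + γ * i x = 0 := by ring
        rw [h0] at this
        exact this.hasDerivWithinAt
      have := constant_of_has_deriv_right_zero hcont hderiv t ⟨h.le, le_rfl⟩
      simpa [hsum0] using this
  -- nonnegativity of each component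
  have hnonneg : ∀ t ∈ Set.Ici (0:ℝ), 0 ≤ s t ∧ 0 ≤ e t ∧ 0 ≤ i t ∧ 0 ≤ r t := by
    intro T hT
    -- bounds on |s|, |i| over [0, T]
    obtain ⟨Ms, hMs⟩ := isCompact_Icc.exists_bound_of_continuousOn
      (hcs.mono (Icc_subset_Ici_self : Set.Icc (0:ℝ) T ⊆ Set.Ici 0))
    obtain ⟨Mi, hMi⟩ := isCompact_Icc.exists_bound_of_continuousOn
      (hci.mono (Icc_subset_Ici_self : Set.Icc (0:ℝ) T ⊆ Set.Ici 0))
    set M : ℝ := max Ms Mi with hMdef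
    have hMs' : ∀ u ∈ Set.Icc (0:ℝ) T, |s u| ≤ M := fun u hu =>
      le_trans (hMs u hu) (le_max_left _ _)
    have hMi' : ∀ u ∈ Set.Icc (0:ℝ) T, |i u| ≤ M := fun u hu =>
      le_trans (hMi u hu) (le_max_right _ _)
    have hM0 : 0 ≤ M := le_trans (abs_nonneg _) (hMs' 0 ⟨le_rfl, hT⟩)
    set K : ℝ := 2 * β * M + ε + γ + 1 with hKdef
    have hkey : ∀ᶠ δ in 𝓝[>] (0:ℝ),
        -(δ * Real.exp (K * T)) < min (min (s T) (e T)) (min (i T) (r T)) := by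
      have hsm : ∀ᶠ δ in 𝓝[>] (0:ℝ), β * δ * Real.exp (K * T) < 1 := by
        have htend : Tendsto (fun δ : ℝ => β * δ * Real.exp (K * T)) (𝓝[>] 0) (𝓝 0) := by
          have : Tendsto (fun δ : ℝ => β * δ * Real.exp (K * T)) (𝓝 0) (𝓝 (β * 0 * Real.exp (K*T))) := by
            exact ((continuous_const.mul continuous_id).mul continuous_const).tendsto 0
          simpa using this.mono_left nhdsWithin_le_nhds
        exact htend (Iio_mem_nhds one_pos)
      have hpos : ∀ᶠ δ in 𝓝[>] (0:ℝ), 0 < δ := eventually_nhdsWithin_of_forall fun x hx => hx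
      filter_upwards [hsm, hpos] with δ hδ1 hδ2
      exact seir_barrier β ε γ M K δ T hβ hε hγ hδ2 hM0
        (by nlinarith) (by nlinarith) (by nlinarith) hδ1 s e i r hs he hi hr
        hMs' hMi' hs0.1 he0.1 hi0.1 hr0.1 T ⟨hT, le_rfl⟩
    have htend : Tendsto (fun δ : ℝ => -(δ * Real.exp (K * T))) (𝓝[>] (0:ℝ)) (𝓝 0) := by
      have : Tendsto (fun δ : ℝ => -(δ * Real.exp (K * T))) (𝓝 0) (𝓝 (-(0 * Real.exp (K*T)))) :=
        ((continuous_id.mul continuous_const).neg).tendsto 0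
      simpa using this.mono_left nhdsWithin_le_nhds
    have hmin : 0 ≤ min (min (s T) (e T)) (min (i T) (r T)) :=
      le_of_tendsto htend (hkey.mono fun δ h => h.le)
    exact ⟨le_trans hmin (le_trans (min_le_left _ _) (min_le_left _ _)),
      le_trans hmin (le_trans (min_le_left _ _) (min_le_right _ _)),
      le_trans hmin (le_trans (min_le_right _ _) (min_le_left _ _)),
      le_trans hmin (le_trans (min_le_right _ _) (min_le_right _ _))⟩
  intro t ht
  obtain ⟨h1, h2, h3, h4⟩ := hnonneg t ht
  have h5 := hsum t ht
  exact ⟨⟨h1, by linarith⟩, ⟨h2, by linarith⟩, ⟨h3, by linarith⟩, ⟨h4, by linarith⟩, h5⟩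
end

section
/- Let β, ε, γ > 0, let λ, ν : [0,T] → ℝ be continuous control functions with λ(t) ∈ [0,1] and ν(t) ≥ 0 for all t ∈ [0,T], and let s, e, i, r : [0,T] → ℝ be differentiable functions satisfying the controlled SEIR system on [0,T] with s(0), e(0), i(0), r(0) ≥ 0 and s(0) + e(0) + i(0) + r(0) = 1. Then for every t ∈ [0,T], s(t), e(t), i(t), r(t) ∈ [0,1] and s(t) + e(t) + i(t) + r(t) = 1. -/
open Set Filter Topology

set_option maxHeartbeats 1000000 in
/-- **Positive invariance of the simplex for the controlled SEIR model.**
For `β, ε, γ > 0`, continuous controls `lam, nu` on `[0,T]` with `λ(t) ∈ [0,1]`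
and `ν(t) ≥ 0`, and differentiable `s, e, i, r` satisfying the controlled SEIR
system on `[0,T]` with nonnegative initial data summing to `1`, every component
stays in `[0,1]` and the components sum to `1` on all of `[0,T]`. -/
theorem controlled_seir_simplex_positively_invariant
    (T : ℝ) (β ε γ : ℝ) (hβ : 0 < β) (hε : 0 < ε) (hγ : 0 < γ)
    (lam nu : ℝ → ℝ)
    (hlam : ContinuousOn lam (Set.Icc 0 T)) (hnu : ContinuousOn nu (Set.Icc 0 T))
    (hlam01 : ∀ t ∈ Set.Icc (0 : ℝ) T, lam t ∈ Set.Icc (0 : ℝ) 1)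
    (hnu0 : ∀ t ∈ Set.Icc (0 : ℝ) T, 0 ≤ nu t)
    (s e i r : ℝ → ℝ)
    (hs : ∀ t ∈ Set.Icc (0 : ℝ) T,
      HasDerivAt s (-β * (1 - lam t) * s t * i t - nu t * s t) t)
    (he : ∀ t ∈ Set.Icc (0 : ℝ) T,
      HasDerivAt e (β * (1 - lam t) * s t * i t - ε * e t) t)
    (hi : ∀ t ∈ Set.Icc (0 : ℝ) T, HasDerivAt i (ε * e t - γ * i t) t)
    (hr : ∀ t ∈ Set.Icc (0 : ℝ) T, HasDerivAt r (γ * i t + nu t * s t) t)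
    (hs0 : 0 ≤ s 0) (he0 : 0 ≤ e 0) (hi0 : 0 ≤ i 0) (hr0 : 0 ≤ r 0)
    (hsum0 : s 0 + e 0 + i 0 + r 0 = 1) :
    ∀ t ∈ Set.Icc (0 : ℝ) T,
      s t ∈ Set.Icc (0 : ℝ) 1 ∧ e t ∈ Set.Icc (0 : ℝ) 1 ∧
      i t ∈ Set.Icc (0 : ℝ) 1 ∧ r t ∈ Set.Icc (0 : ℝ) 1 ∧
      s t + e t + i t + r t = 1 := by
  rcases lt_or_ge T 0 with hT | hT
  · intro t ht
    rw [Set.Icc_eq_empty (not_le.mpr hT)] at ht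
    exact absurd ht (Set.notMem_empty t)
  -- continuity of the state variables on `[0,T]`
  have hsc : ContinuousOn s (Set.Icc 0 T) := fun t ht =>
    ((hs t ht).continuousAt).continuousWithinAt
  have hec : ContinuousOn e (Set.Icc 0 T) := fun t ht =>
    ((he t ht).continuousAt).continuousWithinAt
  have hic : ContinuousOn i (Set.Icc 0 T) := fun t ht =>
    ((hi t ht).continuousAt).continuousWithinAt
  have hrc : ContinuousOn r (Set.Icc 0 T) := fun t ht =>
    ((hr t ht).continuousAt).continuousWithinAt
  -- bounds on the coefficients
  obtain ⟨C1, hC1⟩ := isCompact_Icc.exists_bound_of_continuousOn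
    (f := fun t => β * (1 - lam t) * s t)
    (((continuousOn_const.mul (continuousOn_const.sub hlam)).mul hsc))
  obtain ⟨C2, hC2⟩ := isCompact_Icc.exists_bound_of_continuousOn
    (f := fun t => β * (1 - lam t) * i t + nu t)
    (((continuousOn_const.mul (continuousOn_const.sub hlam)).mul hic).add hnu)
  set M : ℝ := max C1 (max C2 (max ε γ)) with hM
  have hC1M : C1 ≤ M := le_max_left _ _
  have hC2M : C2 ≤ M := le_trans (le_max_left _ _) (le_max_right _ _)
  have hMε : ε ≤ M := le_trans (le_trans (le_max_left _ _) (le_max_right _ _)) (le_max_right _ _)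
  have hMγ : γ ≤ M := le_trans (le_trans (le_max_right _ _) (le_max_right _ _)) (le_max_right _ _)
  have hM0 : 0 ≤ M := le_trans hε.le hMε
  set C : ℝ := M + 1 with hC
  have hC0 : 0 < C := by linarith
  -- derivative of the barrier function
  have hB : ∀ δ : ℝ, ∀ x : ℝ,
      HasDerivAt (fun t => δ * Real.exp (2 * C * t)) (δ * (Real.exp (2 * C * x) * (2 * C))) x := by
    intro δ x
    have h1 : HasDerivAt (fun t : ℝ => 2 * C * t) (2 * C) x := by
      simpa using (hasDerivAt_id x).const_mul (2 * C)
    exact (h1.exp).const_mul δ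
  -- Step 1 : nonnegativity of s
  have key_s : ∀ δ : ℝ, 0 < δ → ∀ t ∈ Set.Icc (0 : ℝ) T,
      -(s t) ≤ δ * Real.exp (2 * C * t) := by
    intro δ hδ t ht
    refine image_le_of_deriv_right_lt_deriv_boundary
      (f := fun t => -(s t))
      (f' := fun t => -(-β * (1 - lam t) * s t * i t - nu t * s t))
      (B := fun t => δ * Real.exp (2 * C * t))
      (B' := fun x => δ * (Real.exp (2 * C * x) * (2 * C)))
      ?_ ?_ ?_ (hB δ) ?_ ht
    · exact hsc.neg
    · exact fun x hx => ((hs x (Set.Ico_subset_Icc_self hx)).neg).hasDerivWithinAt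
    · beta_reduce
      have h0 : (2 : ℝ) * C * 0 = 0 := by ring
      rw [h0, Real.exp_zero, mul_one]
      linarith
    · intro x hx hfx
      beta_reduce at hfx ⊢
      have hxI := Set.Ico_subset_Icc_self hx
      have hE : 0 < Real.exp (2 * C * x) := Real.exp_pos _
      have hδE : 0 < δ * Real.exp (2 * C * x) := mul_pos hδ hE
      have hb := hC2 x hxI
      rw [Real.norm_eq_abs, abs_le] at hb
      have hsx : s x = -(δ * Real.exp (2 * C * x)) := by linarith
      have expand : -(-β * (1 - lam x) * s x * i x - nu x * s x)
          = (β * (1 - lam x) * i x + nu x) * s x := by ring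
      rw [expand, hsx]
      nlinarith [mul_nonneg (by linarith [hb.1] : (0:ℝ) ≤ β * (1 - lam x) * i x + nu x + C2)
        hδE.le, mul_nonneg (sub_nonneg.mpr hC2M) hδE.le, mul_nonneg hM0 hδE.le, hδE]
  have hsnn : ∀ t ∈ Set.Icc (0 : ℝ) T, 0 ≤ s t := by
    intro t ht
    by_contra h
    push_neg at h
    have hE : 0 < Real.exp (2 * C * t) := Real.exp_pos _
    have hδ : 0 < -(s t) / (2 * Real.exp (2 * C * t)) :=
      div_pos (by linarith) (by positivity)
    have hkey := key_s _ hδ t ht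
    have hEq : -(s t) / (2 * Real.exp (2 * C * t)) * Real.exp (2 * C * t) = -(s t) / 2 := by
      field_simp
    rw [hEq] at hkey
    linarith
  -- Step 2 : nonnegativity of e and i (jointly, via the max of negative parts)
  have key_ei : ∀ δ : ℝ, 0 < δ → ∀ t ∈ Set.Icc (0 : ℝ) T,
      max (-(e t)) (-(i t)) ≤ δ * Real.exp (2 * C * t) := by
    intro δ hδ t ht
    refine image_le_of_liminf_slope_right_lt_deriv_boundary
      (f := fun t => max (-(e t)) (-(i t)))
      (f' := fun x => if -(e x) < -(i x) then -(ε * e x - γ * i x)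
        else if -(i x) < -(e x) then -(β * (1 - lam x) * s x * i x - ε * e x)
        else max (-(β * (1 - lam x) * s x * i x - ε * e x)) (-(ε * e x - γ * i x)))
      (B := fun t => δ * Real.exp (2 * C * t))
      (B' := fun x => δ * (Real.exp (2 * C * x) * (2 * C)))
      ?_ ?_ ?_ (hB δ) ?_ ht
    · exact (hec.neg).sup (hic.neg)
    · -- liminf slope condition
      intro x hx ρ hρ
      beta_reduce at hρ
      have hxI := Set.Ico_subset_Icc_self hx
      have hde : HasDerivAt (fun t => -(e t)) (-(β * (1 - lam x) * s x * i x - ε * e x)) x :=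
        (he x hxI).neg
      have hdi : HasDerivAt (fun t => -(i t)) (-(ε * e x - γ * i x)) x := (hi x hxI).neg
      have hecx : ContinuousAt (fun t => -(e t)) x := ((he x hxI).continuousAt).neg
      have hicx : ContinuousAt (fun t => -(i t)) x := ((hi x hxI).continuousAt).neg
      have hslope_e : Tendsto (slope (fun t => -(e t)) x) (𝓝[>] x)
          (𝓝 (-(β * (1 - lam x) * s x * i x - ε * e x))) :=
        (hasDerivAt_iff_tendsto_slope.mp hde).mono_left
          (nhdsWithin_mono x (fun z hz => ne_of_gt hz))
      have hslope_i : Tendsto (slope (fun t => -(i t)) x) (𝓝[>] x)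
          (𝓝 (-(ε * e x - γ * i x))) :=
        (hasDerivAt_iff_tendsto_slope.mp hdi).mono_left
          (nhdsWithin_mono x (fun z hz => ne_of_gt hz))
      split_ifs at hρ with h1 h2
      · -- -(e x) < -(i x) : the max is -(i ·) near x
        have hev1 : ∀ᶠ z in 𝓝[>] x, slope (fun t => -(i t)) x z < ρ :=
          hslope_i.eventually (eventually_lt_nhds hρ)
        have hev2 : ∀ᶠ z in 𝓝[>] x, -(e z) < -(i z) :=
          ((hecx.eventually_lt hicx h1)).filter_mono nhdsWithin_le_nhds
        apply Filter.Eventually.frequently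
        filter_upwards [hev1, hev2] with z hz1 hz2
        have hfz : slope (fun t => max (-(e t)) (-(i t))) x z
            = slope (fun t => -(i t)) x z := by
          rw [slope_def_field, slope_def_field]
          simp only [max_eq_right h1.le, max_eq_right hz2.le]
        rw [hfz]; exact hz1
      · -- -(i x) < -(e x)
        have hev1 : ∀ᶠ z in 𝓝[>] x, slope (fun t => -(e t)) x z < ρ :=
          hslope_e.eventually (eventually_lt_nhds hρ)
        have hev2 : ∀ᶠ z in 𝓝[>] x, -(i z) < -(e z) :=
          ((hicx.eventually_lt hecx h2)).filter_mono nhdsWithin_le_nhds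
        apply Filter.Eventually.frequently
        filter_upwards [hev1, hev2] with z hz1 hz2
        have hfz : slope (fun t => max (-(e t)) (-(i t))) x z
            = slope (fun t => -(e t)) x z := by
          rw [slope_def_field, slope_def_field]
          simp only [max_eq_left h2.le, max_eq_left hz2.le]
        rw [hfz]; exact hz1
      · -- tie case
        have heq : -(e x) = -(i x) := le_antisymm (not_lt.mp h2) (not_lt.mp h1)
        have hρe : -(β * (1 - lam x) * s x * i x - ε * e x) < ρ :=
          lt_of_le_of_lt (le_max_left _ _) hρ
        have hρi : -(ε * e x - γ * i x) < ρ := lt_of_le_of_lt (le_max_right _ _) hρ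
        have hev1 : ∀ᶠ z in 𝓝[>] x, slope (fun t => -(e t)) x z < ρ :=
          hslope_e.eventually (eventually_lt_nhds hρe)
        have hev2 : ∀ᶠ z in 𝓝[>] x, slope (fun t => -(i t)) x z < ρ :=
          hslope_i.eventually (eventually_lt_nhds hρi)
        apply Filter.Eventually.frequently
        filter_upwards [hev1, hev2, self_mem_nhdsWithin] with z hz1 hz2 hz3
        have hzx : (0 : ℝ) < z - x := sub_pos.mpr hz3
        have hfz : slope (fun t => max (-(e t)) (-(i t))) x z
            = max (slope (fun t => -(e t)) x z) (slope (fun t => -(i t)) x z) := by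
          rw [slope_def_field, slope_def_field, slope_def_field,
            max_div_div_right hzx.le]
          congr 1
          rw [show (-(i x)) = (-(e x)) from heq.symm, max_self, max_sub_sub_right]
        rw [hfz]
        exact max_lt hz1 hz2
    · -- initial condition
      beta_reduce
      have h0 : (2 : ℝ) * C * 0 = 0 := by ring
      rw [h0, Real.exp_zero, mul_one]
      exact le_trans (max_le (by linarith) (by linarith)) hδ.le
    · -- the strict bound at touching points
      intro x hx hfB
      beta_reduce at hfB ⊢
      have hxI := Set.Ico_subset_Icc_self hx
      have hE : 0 < Real.exp (2 * C * x) := Real.exp_pos _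
      have hδE : 0 < δ * Real.exp (2 * C * x) := mul_pos hδ hE
      have hee : -(e x) ≤ δ * Real.exp (2 * C * x) := le_trans (le_max_left _ _) hfB.le
      have hie : -(i x) ≤ δ * Real.exp (2 * C * x) := le_trans (le_max_right _ _) hfB.le
      have hbnn : 0 ≤ β * (1 - lam x) * s x :=
        mul_nonneg (mul_nonneg hβ.le (by linarith [(hlam01 x hxI).2])) (hsnn x hxI)
      have hble : β * (1 - lam x) * s x ≤ C1 := by
        have hb := hC1 x hxI
        rw [Real.norm_eq_abs] at hb
        exact le_trans (le_abs_self _) hb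
      split_ifs with h1 h2
      · -- max achieved by -(i x)
        have hi_eq : i x = -(δ * Real.exp (2 * C * x)) := by
          have : max (-(e x)) (-(i x)) = -(i x) := max_eq_right h1.le
          rw [this] at hfB
          linarith
        rw [hi_eq]
        nlinarith [mul_le_mul_of_nonneg_left hee hε.le,
          mul_nonneg (sub_nonneg.mpr hMε) hδE.le, mul_pos hγ hδE, hδE,
          mul_nonneg hM0 hδE.le]
      · -- max achieved by -(e x)
        have he_eq : e x = -(δ * Real.exp (2 * C * x)) := by
          have : max (-(e x)) (-(i x)) = -(e x) := max_eq_left h2.le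
          rw [this] at hfB
          linarith
        rw [he_eq]
        nlinarith [mul_le_mul_of_nonneg_left hie hbnn,
          mul_le_mul_of_nonneg_right hble hδE.le,
          mul_nonneg (sub_nonneg.mpr hC1M) hδE.le, mul_pos hε hδE, hδE,
          mul_nonneg hM0 hδE.le]
      · -- tie
        have heq : -(e x) = -(i x) := le_antisymm (not_lt.mp h2) (not_lt.mp h1)
        have he_eq : e x = -(δ * Real.exp (2 * C * x)) := by
          have : max (-(e x)) (-(i x)) = -(e x) := by
            rw [show (-(i x)) = (-(e x)) from heq.symm, max_self]
          rw [this] at hfB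
          linarith
        have hi_eq : i x = -(δ * Real.exp (2 * C * x)) := by
          have : -(e x) = -(i x) := heq
          linarith [he_eq]
        apply max_lt
        · rw [he_eq, hi_eq]
          nlinarith [mul_nonneg (sub_nonneg.mpr hble) hδE.le,
            mul_nonneg (sub_nonneg.mpr hC1M) hδE.le, mul_pos hε hδE, hδE,
            mul_nonneg hM0 hδE.le, mul_nonneg hbnn hδE.le]
        · rw [he_eq, hi_eq]
          nlinarith [mul_nonneg (sub_nonneg.mpr hMε) hδE.le, mul_pos hγ hδE, hδE,
            mul_nonneg hM0 hδE.le]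
  have heinn : ∀ t ∈ Set.Icc (0 : ℝ) T, 0 ≤ e t ∧ 0 ≤ i t := by
    have hmax : ∀ t ∈ Set.Icc (0 : ℝ) T, max (-(e t)) (-(i t)) ≤ 0 := by
      intro t ht
      by_contra h
      push_neg at h
      have hE : 0 < Real.exp (2 * C * t) := Real.exp_pos _
      have hδ : 0 < max (-(e t)) (-(i t)) / (2 * Real.exp (2 * C * t)) :=
        div_pos h (by positivity)
      have hkey := key_ei _ hδ t ht
      have hEq : max (-(e t)) (-(i t)) / (2 * Real.exp (2 * C * t)) * Real.exp (2 * C * t)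
          = max (-(e t)) (-(i t)) / 2 := by
        field_simp
      rw [hEq] at hkey
      linarith
    intro t ht
    have h := hmax t ht
    exact ⟨by linarith [le_trans (le_max_left (-(e t)) (-(i t))) h],
      by linarith [le_trans (le_max_right (-(e t)) (-(i t))) h]⟩
  -- Step 3 : monotonicity gives nonnegativity of r
  have hrge : ∀ t ∈ Set.Icc (0 : ℝ) T, -(r t) ≤ -(r 0) := by
    intro t ht
    refine image_le_of_deriv_right_le_deriv_boundary
      (f := fun t => -(r t)) (f' := fun t => -(γ * i t + nu t * s t))
      (B := fun _ => -(r 0)) (B' := fun _ => 0)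
      hrc.neg
      (fun x hx => ((hr x (Set.Ico_subset_Icc_self hx)).neg).hasDerivWithinAt)
      le_rfl continuousOn_const
      (fun x _ => (hasDerivWithinAt_const x _ _)) ?_ ht
    intro x hx
    beta_reduce
    have hxI := Set.Ico_subset_Icc_self hx
    have h1 := (heinn x hxI).2
    have h2 := hnu0 x hxI
    have h3 := hsnn x hxI
    nlinarith [mul_nonneg h2 h3, mul_nonneg hγ.le h1]
  -- Step 4 : the total population is constant
  have hsum : ∀ t ∈ Set.Icc (0 : ℝ) T, s t + e t + i t + r t = 1 := by
    have hconst := constant_of_has_deriv_right_zero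
      (f := fun t => s t + e t + i t + r t)
      (((hsc.add hec).add hic).add hrc)
      (fun x hx => by
        have hxI := Set.Ico_subset_Icc_self hx
        have h := (((hs x hxI).add (he x hxI)).add (hi x hxI)).add (hr x hxI)
        convert h.hasDerivWithinAt using 1
        exacts [rfl, by ring])
    intro t ht
    have h := hconst t ht
    beta_reduce at h
    linarith [h]
  -- Final assembly
  intro t ht
  have h1 := hsnn t ht
  have h2 := (heinn t ht).1
  have h3 := (heinn t ht).2
  have h4 : 0 ≤ r t := by linarith [hrge t ht]
  have h5 := hsum t ht
  exact ⟨⟨h1, by linarith⟩, ⟨h2, by linarith⟩, ⟨h3, by linarith⟩, ⟨h4, by linarith⟩, h5⟩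
end

section
/- Let β, ε, γ, μ > 0, let λ, ν : [0,T] → ℝ be continuous with λ(t) ∈ [0,1] and ν(t) ≥ 0 for all t, and let s, e, i : [0,T] → ℝ be differentiable functions satisfying on [0,T] the reduced SEIR system with temporary immunity: s' = -β(1-λ(t)) s i - ν(t) s + μ(1 - s - e - i), e' = β(1-λ(t)) s i - ε e, i' = ε e - γ i. If s(0), e(0), i(0) ≥ 0 and s(0) + e(0) + i(0) ≤ 1, then for all t ∈ [0,T] one has s(t), e(t), i(t) ≥ 0 and s(t) + e(t) + i(t) ≤ 1; that is, the set { (s,e,i) : s, e, i ≥ 0, s + e + i ≤ 1 } is positively invariant. -/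
lemma posPart_sq_hasDerivAt (x : ℝ) :
    HasDerivAt (fun y : ℝ => (max y 0) ^ 2) (2 * max x 0) x := by
  rcases lt_trichotomy x 0 with hx | hx | hx
  · have h0 : max x 0 = 0 := max_eq_right hx.le
    rw [h0, mul_zero]
    have h : (fun y : ℝ => (max y 0) ^ 2) =ᶠ[nhds x] fun _ => (0:ℝ) := by
      filter_upwards [eventually_lt_nhds hx] with y hy
      simp [max_eq_right hy.le]
    exact (hasDerivAt_const x (0:ℝ)).congr_of_eventuallyEq h
  · subst hx
    rw [hasDerivAt_iff_isLittleO, Asymptotics.isLittleO_iff]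
    intro c hc
    filter_upwards [Metric.ball_mem_nhds (0:ℝ) hc] with y hy
    simp only [Real.norm_eq_abs, Metric.mem_ball, Real.dist_eq, sub_zero] at *
    have h1 : |max y 0| ≤ |y| := by
      rcases le_or_gt y 0 with h | h
      · simp [max_eq_right h]
      · simp [max_eq_left h.le]
    calc |(max y 0)^2 - max (0:ℝ) 0 ^2 - y • (2 * max (0:ℝ) 0)|
        = |max y 0| ^2 := by simp [sq_abs]
      _ ≤ |y| * |y| := by rw [sq]; exact mul_le_mul h1 h1 (abs_nonneg _) (abs_nonneg _)
      _ ≤ c * |y| := by nlinarith [abs_nonneg y]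
  · have h0 : max x 0 = x := max_eq_left hx.le
    rw [h0]
    have h : (fun y : ℝ => (max y 0) ^ 2) =ᶠ[nhds x] fun y => y ^ 2 := by
      filter_upwards [eventually_gt_nhds hx] with y hy
      simp [max_eq_left hy.le]
    have hd : HasDerivAt (fun y : ℝ => y ^ 2) (2 * x) x := by
      simpa using (hasDerivAt_pow 2 x)
    exact hd.congr_of_eventuallyEq h


lemma seir_b1 (β μ M sl n S E I a dd : ℝ) (hβ : 0 < β) (hμ : 0 < μ) (hM : 0 ≤ M)
    (hsl0 : 0 ≤ sl) (hsl1 : sl ≤ 1) (hn0 : 0 ≤ n)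
    (hIM : |I| ≤ M) (ha0 : 0 ≤ a) (haS : a * S = -a^2) (hdd0 : 0 ≤ dd)
    (hwd : S + E + I - 1 ≤ dd) :
    2 * a * (β * sl * S * I + n * S - μ * (1 - S - E - I))
      ≤ (2*β*M + μ) * a^2 + μ * dd^2 := by
  obtain ⟨hI1, hI2⟩ := abs_le.mp hIM
  have h1 : 2*a*(β*sl*S*I) ≤ 2*β*M*a^2 := by
    have eq1 : 2*a*(β*sl*S*I) = 2*β*sl*I*(a*S) := by ring
    rw [eq1, haS]
    nlinarith [mul_nonneg (mul_nonneg hβ.le hsl0) (mul_nonneg (sq_nonneg a) (by linarith : 0 ≤ M + I)),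
      mul_nonneg (mul_nonneg hβ.le (by linarith : 0 ≤ 1 - sl)) (mul_nonneg hM (sq_nonneg a))]
  have h2 : 2*a*(n*S) ≤ 0 := by
    have eq1 : 2*a*(n*S) = 2*n*(a*S) := by ring
    rw [eq1, haS]
    nlinarith [mul_nonneg hn0 (sq_nonneg a)]
  have h3 : 2*a*(-(μ*(1-S-E-I))) ≤ μ*a^2 + μ*dd^2 := by
    nlinarith [mul_nonneg hμ.le (sq_nonneg (a - dd)),
      mul_nonneg (mul_nonneg hμ.le ha0) (by linarith : 0 ≤ dd - (S+E+I-1))]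
  linarith

lemma seir_b2 (β ε M sl S E I a b c : ℝ) (hβ : 0 < β) (hε : 0 < ε) (hM : 0 ≤ M)
    (hsl0 : 0 ≤ sl) (hsl1 : sl ≤ 1)
    (hSM : |S| ≤ M) (hIM : |I| ≤ M) (ha0 : 0 ≤ a) (hb0 : 0 ≤ b) (hc0 : 0 ≤ c)
    (hSa : -S ≤ a) (hIc : -I ≤ c) (hcM : c ≤ M) (hbE : b * E = -b^2) :
    2 * b * (-(β * sl * S * I) + ε * E)
      ≤ 2*β*M * a^2 + (3*β*M + ε) * b^2 + β*M * c^2 := by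
  obtain ⟨hS1, hS2⟩ := abs_le.mp hSM
  obtain ⟨hI1, hI2⟩ := abs_le.mp hIM
  have hMC : 0 ≤ M*c + 2*a*M := by positivity
  have key : -(S*I) ≤ M*c + 2*a*M := by
    nlinarith [mul_nonneg (by linarith : 0 ≤ S + a) (by linarith : 0 ≤ I + c),
      mul_nonneg ha0 (by linarith : 0 ≤ M - I), mul_nonneg hc0 (by linarith : 0 ≤ M - S),
      mul_nonneg ha0 (by linarith : 0 ≤ M - c)]
  have h2 : sl * (b * (-(S*I))) ≤ b * (M*c + 2*a*M) := by
    rcases le_or_gt (-(S*I)) 0 with h | h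
    · nlinarith [mul_nonneg hb0 hMC,
        mul_nonneg hsl0 (mul_nonneg hb0 (by linarith : (0:ℝ) ≤ S*I))]
    · nlinarith [mul_nonneg hb0 (by linarith : 0 ≤ M*c + 2*a*M - -(S*I)),
        mul_nonneg (by linarith : 0 ≤ 1 - sl) (mul_nonneg hb0 h.le)]
  have h1 : 2 * b * (-(β * sl * S * I)) ≤ 2*β*(b * (M*c + 2*a*M)) := by
    have eq1 : 2 * b * (-(β * sl * S * I)) = 2*β*(sl * (b * (-(S*I)))) := by ring
    rw [eq1]
    nlinarith [h2]
  have h3 : 2 * b * (ε * E) ≤ 0 := by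
    have eq1 : 2 * b * (ε * E) = 2*ε*(b*E) := by ring
    rw [eq1, hbE]
    nlinarith [mul_nonneg hε.le (sq_nonneg b)]
  nlinarith [mul_nonneg (mul_nonneg hβ.le hM) (sq_nonneg (a-b)),
    mul_nonneg (mul_nonneg hβ.le hM) (sq_nonneg (b-c)),
    mul_nonneg hε.le (sq_nonneg b)]

lemma seir_b3 (ε γ E I b c : ℝ) (hε : 0 < ε) (hγ : 0 < γ)
    (hb0 : 0 ≤ b) (hc0 : 0 ≤ c) (hEb : -E ≤ b) (hcI : c * I = -c^2) :
    2 * c * (-(ε * E - γ * I)) ≤ ε * b^2 + ε * c^2 := by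
  nlinarith [mul_nonneg hε.le (sq_nonneg (b - c)),
    mul_nonneg (mul_nonneg hε.le hc0) (by linarith : 0 ≤ b + E),
    mul_nonneg hγ.le (sq_nonneg c)]

lemma seir_b4 (γ μ M n S E I a c dd : ℝ) (hγ : 0 < γ) (hμ : 0 < μ) (hM : 0 ≤ M)
    (hn0 : 0 ≤ n) (hnM : n ≤ M) (ha0 : 0 ≤ a) (hc0 : 0 ≤ c) (hdd0 : 0 ≤ dd)
    (hSa : -S ≤ a) (hIc : -I ≤ c) (hddw : dd * (S+E+I-1) = dd^2) :
    2 * dd * (-(n * S) - μ * (S+E+I-1) - γ * I)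
      ≤ M * a^2 + γ * c^2 + (M + γ) * dd^2 := by
  nlinarith [sq_nonneg (a - dd), sq_nonneg (c - dd),
    mul_nonneg hdd0 (by linarith : 0 ≤ a + S),
    mul_nonneg (by linarith : 0 ≤ M - n) (mul_nonneg hdd0 ha0),
    mul_nonneg hμ.le (sq_nonneg dd),
    mul_nonneg hγ.le (mul_nonneg hdd0 (by linarith : 0 ≤ c + I)),
    mul_nonneg hγ.le (sq_nonneg (c - dd)),
    mul_nonneg hn0 (mul_nonneg hdd0 (by linarith : 0 ≤ a + S)),
    mul_nonneg hM (sq_nonneg (a - dd))]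

lemma seir_slack (β ε γ μ M a b c dd : ℝ)
    (hβ : 0 < β) (hε : 0 < ε) (hγ : 0 < γ) (hμ : 0 < μ) (hM : 0 ≤ M) :
    (2*β*M + μ) * a^2 + μ * dd^2
      + (2*β*M * a^2 + (3*β*M + ε) * b^2 + β*M * c^2)
      + (ε * b^2 + ε * c^2)
      + (M * a^2 + γ * c^2 + (M + γ) * dd^2)
      ≤ (6*β*M + 2*μ + 2*ε + 2*γ + 2*M + 1) * (a^2 + b^2 + c^2 + dd^2) := by
  have f1 : 0 ≤ β*M*a^2 := by positivity
  have f2 : 0 ≤ β*M*b^2 := by positivity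
  have f3 : 0 ≤ β*M*c^2 := by positivity
  have f4 : 0 ≤ β*M*dd^2 := by positivity
  have f5 : 0 ≤ μ*a^2 := by positivity
  have f6 : 0 ≤ μ*b^2 := by positivity
  have f7 : 0 ≤ μ*c^2 := by positivity
  have f8 : 0 ≤ μ*dd^2 := by positivity
  have f9 : 0 ≤ ε*a^2 := by positivity
  have f10 : 0 ≤ ε*b^2 := by positivity
  have f11 : 0 ≤ ε*c^2 := by positivity
  have f12 : 0 ≤ ε*dd^2 := by positivity
  have f13 : 0 ≤ γ*a^2 := by positivity
  have f14 : 0 ≤ γ*b^2 := by positivity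
  have f15 : 0 ≤ γ*c^2 := by positivity
  have f16 : 0 ≤ γ*dd^2 := by positivity
  have f17 : 0 ≤ M*a^2 := by positivity
  have f18 : 0 ≤ M*b^2 := by positivity
  have f19 : 0 ≤ M*c^2 := by positivity
  have f20 : 0 ≤ M*dd^2 := by positivity
  have f21 : 0 ≤ a^2 := sq_nonneg a
  have f22 : 0 ≤ b^2 := sq_nonneg b
  have f23 : 0 ≤ c^2 := sq_nonneg c
  have f24 : 0 ≤ dd^2 := sq_nonneg dd
  linarith

lemma seir_key_ineq (β ε γ μ M sl n S E I a b c dd : ℝ)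
    (hβ : 0 < β) (hε : 0 < ε) (hγ : 0 < γ) (hμ : 0 < μ) (hM : 0 ≤ M)
    (hsl0 : 0 ≤ sl) (hsl1 : sl ≤ 1) (hn0 : 0 ≤ n) (hnM : n ≤ M)
    (hSM : |S| ≤ M) (hIM : |I| ≤ M)
    (ha0 : 0 ≤ a) (hb0 : 0 ≤ b) (hc0 : 0 ≤ c) (hdd0 : 0 ≤ dd)
    (hSa : -S ≤ a) (hEb : -E ≤ b) (hIc : -I ≤ c) (hwd : S + E + I - 1 ≤ dd)
    (hcM : c ≤ M)
    (haS : a * S = -a^2) (hbE : b * E = -b^2) (hcI : c * I = -c^2)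
    (hddw : dd * (S + E + I - 1) = dd^2) :
    2 * a * (β * sl * S * I + n * S - μ * (1 - S - E - I))
      + 2 * b * (-(β * sl * S * I) + ε * E)
      + 2 * c * (-(ε * E - γ * I))
      + 2 * dd * (-(n * S) - μ * (S + E + I - 1) - γ * I)
    ≤ (6*β*M + 2*μ + 2*ε + 2*γ + 2*M + 1) * (a^2 + b^2 + c^2 + dd^2) := by
  have h1 := seir_b1 β μ M sl n S E I a dd hβ hμ hM hsl0 hsl1 hn0 hIM ha0 haS hdd0 hwd
  have h2 := seir_b2 β ε M sl S E I a b c hβ hε hM hsl0 hsl1 hSM hIM ha0 hb0 hc0 hSa hIc hcM hbE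
  have h3 := seir_b3 ε γ E I b c hε hγ hb0 hc0 hEb hcI
  have h4 := seir_b4 γ μ M n S E I a c dd hγ hμ hM hn0 hnM ha0 hc0 hdd0 hSa hIc hddw
  have h5 := seir_slack β ε γ μ M a b c dd hβ hε hγ hμ hM
  linarith

set_option maxHeartbeats 1000000 in
/-- **Positive invariance for the reduced SEIR model with temporary immunity.**
For `β, ε, γ, μ > 0`, continuous controls `lam, nu` on `[0,T]` with
`λ(t) ∈ [0,1]` and `ν(t) ≥ 0`, and `s, e, i` solving the reduced SEIR system
with temporary immunity on `[0,T]`, if `s(0), e(0), i(0) ≥ 0` with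
`s(0) + e(0) + i(0) ≤ 1`, then `s(t), e(t), i(t) ≥ 0` and
`s(t) + e(t) + i(t) ≤ 1` on all of `[0,T]`: the set
`{(s,e,i) : s, e, i ≥ 0, s + e + i ≤ 1}` is positively invariant. -/
theorem temporary_immunity_positively_invariant
    (T : ℝ) (β ε γ μ : ℝ) (hβ : 0 < β) (hε : 0 < ε) (hγ : 0 < γ) (hμ : 0 < μ)
    (lam nu : ℝ → ℝ)
    (hlam : ContinuousOn lam (Set.Icc 0 T)) (hnu : ContinuousOn nu (Set.Icc 0 T))
    (hlam01 : ∀ t ∈ Set.Icc (0 : ℝ) T, lam t ∈ Set.Icc (0 : ℝ) 1)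
    (hnu0 : ∀ t ∈ Set.Icc (0 : ℝ) T, 0 ≤ nu t)
    (s e i : ℝ → ℝ)
    (hs : ∀ t ∈ Set.Icc (0 : ℝ) T,
      HasDerivAt s (-β * (1 - lam t) * s t * i t - nu t * s t
        + μ * (1 - s t - e t - i t)) t)
    (he : ∀ t ∈ Set.Icc (0 : ℝ) T,
      HasDerivAt e (β * (1 - lam t) * s t * i t - ε * e t) t)
    (hi : ∀ t ∈ Set.Icc (0 : ℝ) T, HasDerivAt i (ε * e t - γ * i t) t)
    (hs0 : 0 ≤ s 0) (he0 : 0 ≤ e 0) (hi0 : 0 ≤ i 0)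
    (hsum0 : s 0 + e 0 + i 0 ≤ 1) :
    ∀ t ∈ Set.Icc (0 : ℝ) T,
      0 ≤ s t ∧ 0 ≤ e t ∧ 0 ≤ i t ∧ s t + e t + i t ≤ 1 := by
  intro t ht
  have hT : (0:ℝ) ≤ T := le_trans ht.1 ht.2
  have h0mem : (0:ℝ) ∈ Set.Icc (0:ℝ) T := ⟨le_refl 0, hT⟩
  have hsC : ContinuousOn s (Set.Icc 0 T) :=
    fun u hu => ((hs u hu).continuousAt).continuousWithinAt
  have heC : ContinuousOn e (Set.Icc 0 T) :=
    fun u hu => ((he u hu).continuousAt).continuousWithinAt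
  have hiC : ContinuousOn i (Set.Icc 0 T) :=
    fun u hu => ((hi u hu).continuousAt).continuousWithinAt
  obtain ⟨Ms, hMs⟩ := (isCompact_Icc (a := (0:ℝ)) (b := T)).exists_bound_of_continuousOn hsC
  obtain ⟨Mi, hMi⟩ := (isCompact_Icc (a := (0:ℝ)) (b := T)).exists_bound_of_continuousOn hiC
  obtain ⟨Mn, hMn⟩ := (isCompact_Icc (a := (0:ℝ)) (b := T)).exists_bound_of_continuousOn hnu
  set M : ℝ := max (max Ms Mi) (max Mn 0) with hMdef
  have hM0 : 0 ≤ M := le_trans (le_max_right Mn 0) (le_max_right _ _)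
  have hMs' : ∀ u ∈ Set.Icc (0:ℝ) T, |s u| ≤ M := fun u hu => le_trans
    (by simpa [Real.norm_eq_abs] using hMs u hu)
    (le_trans (le_max_left Ms Mi) (le_max_left _ _))
  have hMi' : ∀ u ∈ Set.Icc (0:ℝ) T, |i u| ≤ M := fun u hu => le_trans
    (by simpa [Real.norm_eq_abs] using hMi u hu)
    (le_trans (le_max_right Ms Mi) (le_max_left _ _))
  have hMn' : ∀ u ∈ Set.Icc (0:ℝ) T, nu u ≤ M := fun u hu => le_trans
    (le_trans (le_abs_self _) (by simpa [Real.norm_eq_abs] using hMn u hu))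
    (le_trans (le_max_left Mn 0) (le_max_right _ _))
  set K : ℝ := 6*β*M + 2*μ + 2*ε + 2*γ + 2*M + 1 with hKdef
  set v : ℝ → ℝ := fun u => (max (-s u) 0)^2 + (max (-e u) 0)^2 + (max (-i u) 0)^2
      + (max (s u + e u + i u - 1) 0)^2 with hvdef
  have hvnonneg : ∀ u, 0 ≤ v u := by
    intro u; rw [hvdef]; positivity
  have hv0 : v 0 = 0 := by
    rw [hvdef]
    simp only
    rw [max_eq_right (by linarith : -s 0 ≤ 0), max_eq_right (by linarith : -e 0 ≤ 0),
      max_eq_right (by linarith : -i 0 ≤ 0),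
      max_eq_right (by linarith : s 0 + e 0 + i 0 - 1 ≤ 0)]
    ring
  have hvK : ∀ u ∈ Set.Icc (0:ℝ) T, ∃ d, HasDerivAt v d u ∧ d ≤ K * v u := by
    intro u hu
    have hsu := hs u hu
    have heu := he u hu
    have hiu := hi u hu
    have hA : HasDerivAt (fun x => (max (-s x) 0)^2)
        (2 * max (-s u) 0 * -(-β * (1 - lam u) * s u * i u - nu u * s u
          + μ * (1 - s u - e u - i u))) u := by
      simpa [Function.comp_def] using (posPart_sq_hasDerivAt (-s u)).comp u hsu.neg
    have hB : HasDerivAt (fun x => (max (-e x) 0)^2)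
        (2 * max (-e u) 0 * -(β * (1 - lam u) * s u * i u - ε * e u)) u := by
      simpa [Function.comp_def] using (posPart_sq_hasDerivAt (-e u)).comp u heu.neg
    have hC : HasDerivAt (fun x => (max (-i x) 0)^2)
        (2 * max (-i u) 0 * -(ε * e u - γ * i u)) u := by
      simpa [Function.comp_def] using (posPart_sq_hasDerivAt (-i u)).comp u hiu.neg
    have hw : HasDerivAt (fun x => s x + e x + i x - 1)
        ((-β * (1 - lam u) * s u * i u - nu u * s u + μ * (1 - s u - e u - i u))
          + (β * (1 - lam u) * s u * i u - ε * e u) + (ε * e u - γ * i u)) u :=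
      ((hsu.add heu).add hiu).sub_const 1
    have hD : HasDerivAt (fun x => (max (s x + e x + i x - 1) 0)^2)
        (2 * max (s u + e u + i u - 1) 0 *
          ((-β * (1 - lam u) * s u * i u - nu u * s u + μ * (1 - s u - e u - i u))
          + (β * (1 - lam u) * s u * i u - ε * e u) + (ε * e u - γ * i u))) u := by
      simpa [Function.comp_def] using
        (posPart_sq_hasDerivAt (s u + e u + i u - 1)).comp u hw
    refine ⟨_, by rw [hvdef]; exact ((hA.add hB).add hC).add hD, ?_⟩
    obtain ⟨hl0, hl1⟩ := hlam01 u hu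
    have haS : max (-s u) 0 * s u = -(max (-s u) 0)^2 := by
      rcases le_or_gt 0 (s u) with h | h
      · rw [max_eq_right (by linarith : -s u ≤ 0)]; ring
      · rw [max_eq_left (by linarith : (0:ℝ) ≤ -s u)]; ring
    have hbE : max (-e u) 0 * e u = -(max (-e u) 0)^2 := by
      rcases le_or_gt 0 (e u) with h | h
      · rw [max_eq_right (by linarith : -e u ≤ 0)]; ring
      · rw [max_eq_left (by linarith : (0:ℝ) ≤ -e u)]; ring
    have hcI : max (-i u) 0 * i u = -(max (-i u) 0)^2 := by
      rcases le_or_gt 0 (i u) with h | h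
      · rw [max_eq_right (by linarith : -i u ≤ 0)]; ring
      · rw [max_eq_left (by linarith : (0:ℝ) ≤ -i u)]; ring
    have hddw : max (s u + e u + i u - 1) 0 * (s u + e u + i u - 1)
        = (max (s u + e u + i u - 1) 0)^2 := by
      rcases le_or_gt (s u + e u + i u - 1) 0 with h | h
      · rw [max_eq_right h]; ring
      · rw [max_eq_left h.le]; ring
    have hcM : max (-i u) 0 ≤ M := max_le (le_trans (neg_le_abs (i u)) (hMi' u hu)) hM0
    have hkey := seir_key_ineq β ε γ μ M (1 - lam u) (nu u) (s u) (e u) (i u)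
      (max (-s u) 0) (max (-e u) 0) (max (-i u) 0) (max (s u + e u + i u - 1) 0)
      hβ hε hγ hμ hM0 (by linarith) (by linarith) (hnu0 u hu) (hMn' u hu)
      (hMs' u hu) (hMi' u hu)
      (le_max_right _ _) (le_max_right _ _) (le_max_right _ _) (le_max_right _ _)
      (le_max_left _ _) (le_max_left _ _) (le_max_left _ _) (le_max_left _ _)
      hcM haS hbE hcI hddw
    have hveq : K * v u = (6*β*M + 2*μ + 2*ε + 2*γ + 2*M + 1) *
        ((max (-s u) 0)^2 + (max (-e u) 0)^2 + (max (-i u) 0)^2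
          + (max (s u + e u + i u - 1) 0)^2) := by
      rw [hvdef, hKdef]
    rw [hveq]
    calc 2 * max (-s u) 0 * -(-β * (1 - lam u) * s u * i u - nu u * s u
            + μ * (1 - s u - e u - i u))
          + 2 * max (-e u) 0 * -(β * (1 - lam u) * s u * i u - ε * e u)
          + 2 * max (-i u) 0 * -(ε * e u - γ * i u)
          + 2 * max (s u + e u + i u - 1) 0 *
            ((-β * (1 - lam u) * s u * i u - nu u * s u + μ * (1 - s u - e u - i u))
            + (β * (1 - lam u) * s u * i u - ε * e u) + (ε * e u - γ * i u))
        = 2 * max (-s u) 0 * (β * (1 - lam u) * s u * i u + nu u * s u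
            - μ * (1 - s u - e u - i u))
          + 2 * max (-e u) 0 * (-(β * (1 - lam u) * s u * i u) + ε * e u)
          + 2 * max (-i u) 0 * (-(ε * e u - γ * i u))
          + 2 * max (s u + e u + i u - 1) 0 *
            (-(nu u * s u) - μ * (s u + e u + i u - 1) - γ * i u) := by ring
      _ ≤ _ := hkey
  set g : ℝ → ℝ := fun x => v x * Real.exp (-K * x) with hgdef
  have hgd : ∀ u ∈ Set.Icc (0:ℝ) T, ∃ d, HasDerivAt g d u ∧ d ≤ 0 := by
    intro u hu
    obtain ⟨d, hd, hdle⟩ := hvK u hu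
    have hexp : HasDerivAt (fun x => Real.exp (-K * x)) (Real.exp (-K * u) * -K) u := by
      have h' : HasDerivAt (fun x : ℝ => -K * x) (-K) u := by
        simpa using (hasDerivAt_id u).const_mul (-K)
      exact h'.exp
    refine ⟨_, hd.mul hexp, ?_⟩
    have h1 : 0 ≤ (K * v u - d) * Real.exp (-K * u) :=
      mul_nonneg (by linarith) (Real.exp_nonneg _)
    nlinarith [h1]
  have hvC : ContinuousOn v (Set.Icc (0:ℝ) T) :=
    fun u hu => ((hvK u hu).choose_spec.1).continuousAt.continuousWithinAt
  have hgC : ContinuousOn g (Set.Icc (0:ℝ) T) := by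
    rw [hgdef]
    exact hvC.mul ((Real.continuous_exp.comp (continuous_const.mul continuous_id)).continuousOn)
  have hgDiff : DifferentiableOn ℝ g (interior (Set.Icc (0:ℝ) T)) := by
    rw [interior_Icc]
    intro u hu
    obtain ⟨d, hd, _⟩ := hgd u (Set.mem_Icc_of_Ioo hu)
    exact hd.differentiableAt.differentiableWithinAt
  have hgderiv : ∀ u ∈ interior (Set.Icc (0:ℝ) T), deriv g u ≤ 0 := by
    rw [interior_Icc]
    intro u hu
    obtain ⟨d, hd, hd0⟩ := hgd u (Set.mem_Icc_of_Ioo hu)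
    rw [hd.deriv]; exact hd0
  have hanti : AntitoneOn g (Set.Icc (0:ℝ) T) :=
    antitoneOn_of_deriv_nonpos (convex_Icc 0 T) hgC hgDiff hgderiv
  have hgt : g t ≤ g 0 := hanti h0mem ht ht.1
  have hg0 : g 0 = 0 := by rw [hgdef]; simp [hv0]
  have hvt : v t = 0 := by
    have h1 : v t * Real.exp (-K * t) ≤ 0 := by
      rw [hg0] at hgt; exact hgt
    have h2 := Real.exp_pos (-K * t)
    nlinarith [hvnonneg t]
  have hsq : (max (-s t) 0)^2 + (max (-e t) 0)^2 + (max (-i t) 0)^2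
      + (max (s t + e t + i t - 1) 0)^2 = 0 := by rw [hvdef] at hvt; exact hvt
  have h1 : max (-s t) 0 = 0 := by
    nlinarith [sq_nonneg (max (-s t) 0), sq_nonneg (max (-e t) 0), sq_nonneg (max (-i t) 0),
      sq_nonneg (max (s t + e t + i t - 1) 0), le_max_right (-s t) (0:ℝ)]
  have h2 : max (-e t) 0 = 0 := by
    nlinarith [sq_nonneg (max (-s t) 0), sq_nonneg (max (-e t) 0), sq_nonneg (max (-i t) 0),
      sq_nonneg (max (s t + e t + i t - 1) 0), le_max_right (-e t) (0:ℝ)]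
  have h3 : max (-i t) 0 = 0 := by
    nlinarith [sq_nonneg (max (-s t) 0), sq_nonneg (max (-e t) 0), sq_nonneg (max (-i t) 0),
      sq_nonneg (max (s t + e t + i t - 1) 0), le_max_right (-i t) (0:ℝ)]
  have h4 : max (s t + e t + i t - 1) 0 = 0 := by
    nlinarith [sq_nonneg (max (-s t) 0), sq_nonneg (max (-e t) 0), sq_nonneg (max (-i t) 0),
      sq_nonneg (max (s t + e t + i t - 1) 0), le_max_right (s t + e t + i t - 1) (0:ℝ)]
  refine ⟨?_, ?_, ?_, ?_⟩
  · have := le_max_left (-s t) (0:ℝ); rw [h1] at this; linarith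
  · have := le_max_left (-e t) (0:ℝ); rw [h2] at this; linarith
  · have := le_max_left (-i t) (0:ℝ); rw [h3] at this; linarith
  · have := le_max_left (s t + e t + i t - 1) (0:ℝ); rw [h4] at this; linarith
end

section
/- Let β, ε, γ > 0, δ₁, δ₂, δ₃, δ₄ ≥ 0, let λ, φ : [0,T] → ℝ be continuous with λ(t) ≤ 1 and φ(t) ≥ 0 for all t, and let s, e, i, r : [0,T] → ℝ be differentiable functions satisfying the SEIR system with border control on [0,T] with s(0), e(0), i(0), r(0) ≥ 0. Then s(t), e(t), i(t), r(t) ≥ 0 for all t ∈ [0,T]; that is, the nonnegative orthant is positively invariant for the border-control system. -/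
open Filter Set Topology

private lemma negPart_slope_lt (s : ℝ → ℝ) (d x δ : ℝ) (hδ : 0 < δ)
    (hd : HasDerivAt s d x) :
    ∀ᶠ z in 𝓝[>] x, slope (fun t => max (-s t) 0) x z
      < (if 0 < s x then 0 else max (-d) 0) + δ := by
  by_cases hsx : 0 < s x
  · rw [if_pos hsx]
    have h1 : ∀ᶠ z in 𝓝 x, 0 < s z :=
      hd.continuousAt.eventually_const_lt hsx
    filter_upwards [h1.filter_mono nhdsWithin_le_nhds] with z hz
    have hx0 : max (-s x) 0 = 0 := max_eq_right (by linarith)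
    have hz0 : max (-s z) 0 = 0 := max_eq_right (by linarith)
    rw [slope_def_field, hx0, hz0]
    simpa using hδ
  · rw [if_neg hsx]
    push_neg at hsx
    have hslope : Tendsto (slope s x) (𝓝[>] x) (𝓝 d) :=
      (hasDerivAt_iff_tendsto_slope.1 hd).mono_left
        (nhdsWithin_mono x (fun z hz => ne_of_gt hz))
    have h2 : Tendsto (fun z => max (-(slope s x z)) 0) (𝓝[>] x) (𝓝 (max (-d) 0)) :=
      hslope.neg.max tendsto_const_nhds
    have h3 : ∀ᶠ z in 𝓝[>] x, max (-(slope s x z)) 0 < max (-d) 0 + δ :=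
      h2.eventually_lt_const (by linarith)
    filter_upwards [h3, self_mem_nhdsWithin] with z h3z hz
    refine lt_of_le_of_lt ?_ h3z
    have hc : (0:ℝ) < z - x := sub_pos.2 hz
    rw [slope_def_field] at h3z ⊢
    rw [slope_def_field, div_le_iff₀ hc]
    have : max (-((s z - s x) / (z - x))) 0 * (z - x)
        = max (s x - s z) 0 := by
      rw [max_mul_of_nonneg _ _ hc.le, zero_mul, ← neg_div,
        div_mul_cancel₀ _ hc.ne', neg_sub]
    rw [this]
    have hbx : max (-s x) 0 = -s x := max_eq_left (by linarith)
    rw [hbx]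
    rcases le_total (s z) 0 with ha | ha
    · rw [max_eq_left (by linarith)]
      have : -s z - -s x = s x - s z := by ring
      rw [this]
      exact le_max_left _ _
    · rw [max_eq_right (by linarith)]
      have : (0:ℝ) ≤ max (s x - s z) 0 := le_max_right _ _
      linarith

private lemma neg_mul_le_aux (a b M : ℝ) (ha : |a| ≤ M) (hb : |b| ≤ M) :
    -(a * b) ≤ M * max (-a) 0 + M * max (-b) 0 := by
  have hM : 0 ≤ M := (abs_nonneg a).trans ha
  rcases le_total a 0 with h1 | h1 <;> rcases le_total b 0 with h2 | h2
  · nlinarith [mul_nonneg (neg_nonneg.2 h1) (neg_nonneg.2 h2),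
      mul_nonneg hM (le_max_right (-a) 0), mul_nonneg hM (le_max_right (-b) 0)]
  · rw [max_eq_left (by linarith), max_eq_right (by linarith)]
    nlinarith [mul_le_mul_of_nonneg_left (le_trans (le_abs_self b) hb) (neg_nonneg.2 h1)]
  · rw [max_eq_right (by linarith), max_eq_left (by linarith)]
    nlinarith [mul_le_mul_of_nonneg_right (le_trans (le_abs_self a) ha) (neg_nonneg.2 h2)]
  · nlinarith [mul_nonneg h1 h2,
      mul_nonneg hM (le_max_right (-a) 0), mul_nonneg hM (le_max_right (-b) 0)]

private lemma gronwall_zero_aux (T K' : ℝ) (N F : ℝ → ℝ)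
    (hN : ContinuousOn N (Set.Icc 0 T)) (hK' : 0 ≤ K') (hN0 : N 0 ≤ 0)
    (hf' : ∀ x ∈ Set.Ico 0 T, ∀ r, F x < r → ∃ᶠ z in 𝓝[>] x, slope N x z < r)
    (hFN : ∀ x ∈ Set.Icc 0 T, F x ≤ K' * N x) :
    ∀ t ∈ Set.Icc 0 T, N t ≤ 0 := by
  set K := K' + 1 with hKdef
  intro t ht
  by_contra hcon
  push_neg at hcon
  set c := N t / (2 * Real.exp (K * t)) with hcdef
  have hc : 0 < c := div_pos hcon (by positivity)
  have hB : ∀ y : ℝ, HasDerivAt (fun u => c * Real.exp (K * u))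
      (c * (Real.exp (K * y) * K)) y := by
    intro y
    have := (((hasDerivAt_id y).const_mul K).exp).const_mul c
    simpa using this
  have ha : N 0 ≤ c * Real.exp (K * 0) := by
    have : c * Real.exp (K * 0) = c := by simp
    rw [this]; linarith
  have bound : ∀ x ∈ Set.Ico 0 T, N x = c * Real.exp (K * x)
      → F x < c * (Real.exp (K * x) * K) := by
    intro x hx hNB
    have hE : 0 < c * Real.exp (K * x) := by positivity
    calc F x ≤ K' * N x := hFN x (Set.Ico_subset_Icc_self hx)
      _ = K' * (c * Real.exp (K * x)) := by rw [hNB]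
      _ < c * (Real.exp (K * x) * K) := by rw [hKdef]; nlinarith [hE]
  have hmain := image_le_of_liminf_slope_right_lt_deriv_boundary hN hf' ha hB bound
  have htle : N t ≤ c * Real.exp (K * t) := hmain ht
  have hEt : Real.exp (K * t) ≠ 0 := (Real.exp_pos _).ne'
  have : c * Real.exp (K * t) = N t / 2 := by
    rw [hcdef]; field_simp
  linarith [htle.trans_eq this]

/-- **The nonnegative orthant is positively invariant for the border-control SEIR model.**
For `β, ε, γ > 0`, inflow rates `δ₁, δ₂, δ₃, δ₄ ≥ 0`, continuous controls
`lam, φ` on `[0,T]` with `λ(t) ≤ 1` and `φ(t) ≥ 0`, and differentiable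
`s, e, i, r` satisfying the SEIR system with border control on `[0,T]` with
nonnegative initial data, all components remain nonnegative on `[0,T]`. -/
theorem border_control_orthant_positively_invariant
    (T : ℝ) (β ε γ : ℝ) (hβ : 0 < β) (hε : 0 < ε) (hγ : 0 < γ)
    (δ₁ δ₂ δ₃ δ₄ : ℝ) (hδ₁ : 0 ≤ δ₁) (hδ₂ : 0 ≤ δ₂) (hδ₃ : 0 ≤ δ₃) (hδ₄ : 0 ≤ δ₄)
    (lam φ : ℝ → ℝ)
    (hlam : ContinuousOn lam (Set.Icc 0 T)) (hφ : ContinuousOn φ (Set.Icc 0 T))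
    (hlam1 : ∀ t ∈ Set.Icc (0 : ℝ) T, lam t ≤ 1)
    (hφ0 : ∀ t ∈ Set.Icc (0 : ℝ) T, 0 ≤ φ t)
    (s e i r : ℝ → ℝ)
    (hs : ∀ t ∈ Set.Icc (0 : ℝ) T,
      HasDerivAt s (-β * (1 - lam t) * s t * i t + φ t * δ₁) t)
    (he : ∀ t ∈ Set.Icc (0 : ℝ) T,
      HasDerivAt e (β * (1 - lam t) * s t * i t - ε * e t + φ t * δ₂) t)
    (hi : ∀ t ∈ Set.Icc (0 : ℝ) T,
      HasDerivAt i (ε * e t - γ * i t + φ t * δ₃) t)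
    (hr : ∀ t ∈ Set.Icc (0 : ℝ) T, HasDerivAt r (γ * i t + φ t * δ₄) t)
    (hs0 : 0 ≤ s 0) (he0 : 0 ≤ e 0) (hi0 : 0 ≤ i 0) (hr0 : 0 ≤ r 0) :
    ∀ t ∈ Set.Icc (0 : ℝ) T,
      0 ≤ s t ∧ 0 ≤ e t ∧ 0 ≤ i t ∧ 0 ≤ r t := by
  rcases lt_or_ge T 0 with hT | hT
  · intro t ht; exact absurd (ht.1.trans ht.2) (not_le.2 hT)
  have h0T : (0:ℝ) ∈ Set.Icc (0:ℝ) T := ⟨le_rfl, hT⟩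
  -- continuity of the solution components
  have hscont : ContinuousOn s (Set.Icc 0 T) :=
    fun t ht => (hs t ht).continuousAt.continuousWithinAt
  have hecont : ContinuousOn e (Set.Icc 0 T) :=
    fun t ht => (he t ht).continuousAt.continuousWithinAt
  have hicont : ContinuousOn i (Set.Icc 0 T) :=
    fun t ht => (hi t ht).continuousAt.continuousWithinAt
  have hrcont : ContinuousOn r (Set.Icc 0 T) :=
    fun t ht => (hr t ht).continuousAt.continuousWithinAt
  -- bounds
  obtain ⟨Cs, hCs⟩ := isCompact_Icc.exists_bound_of_continuousOn hscont
  obtain ⟨Ci, hCi⟩ := isCompact_Icc.exists_bound_of_continuousOn hicont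
  obtain ⟨Cl, hCl⟩ := isCompact_Icc.exists_bound_of_continuousOn
    (continuousOn_const.sub hlam : ContinuousOn (fun t => (1:ℝ) - lam t) (Set.Icc 0 T))
  have hCs0 : 0 ≤ Cs := (norm_nonneg _).trans (hCs 0 h0T)
  have hCi0 : 0 ≤ Ci := (norm_nonneg _).trans (hCi 0 h0T)
  have hCl0 : 0 ≤ Cl := (norm_nonneg _).trans (hCl 0 h0T)
  obtain ⟨M, hMdef⟩ : ∃ M : ℝ, M = max Cs Ci := ⟨_, rfl⟩
  have hM0 : 0 ≤ M := hMdef ▸ hCs0.trans (le_max_left _ _)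
  obtain ⟨A, hAdef⟩ : ∃ A : ℝ, A = β * Cl * M := ⟨_, rfl⟩
  have hA0 : 0 ≤ A := by rw [hAdef]; positivity
  obtain ⟨K', hK'def⟩ : ∃ K' : ℝ, K' = 2 * A + 2 * ε + 2 * γ := ⟨_, rfl⟩
  have hK'0 : 0 ≤ K' := by rw [hK'def]; positivity
  obtain ⟨N, hNdef⟩ : ∃ N : ℝ → ℝ,
      N = fun t => max (-s t) 0 + max (-e t) 0 + max (-i t) 0 + max (-r t) 0 := ⟨_, rfl⟩
  obtain ⟨F, hFdef⟩ : ∃ F : ℝ → ℝ, F = fun x =>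
      (if 0 < s x then 0 else max (-(-β * (1 - lam x) * s x * i x + φ x * δ₁)) 0)
    + (if 0 < e x then 0 else max (-(β * (1 - lam x) * s x * i x - ε * e x + φ x * δ₂)) 0)
    + (if 0 < i x then 0 else max (-(ε * e x - γ * i x + φ x * δ₃)) 0)
    + (if 0 < r x then 0 else max (-(γ * i x + φ x * δ₄)) 0) := ⟨_, rfl⟩
  have hNcont : ContinuousOn N (Set.Icc 0 T) := by
    rw [hNdef]
    exact (((hscont.neg.sup continuousOn_const).add (hecont.neg.sup continuousOn_const)).add
      (hicont.neg.sup continuousOn_const)).add (hrcont.neg.sup continuousOn_const)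
  have hN0 : N 0 ≤ 0 := by
    rw [hNdef]
    simp only
    rw [max_eq_right (by linarith), max_eq_right (by linarith),
      max_eq_right (by linarith), max_eq_right (by linarith)]
    norm_num
  -- the slope estimate
  have hf' : ∀ x ∈ Set.Ico (0:ℝ) T, ∀ ρ, F x < ρ → ∃ᶠ z in 𝓝[>] x, slope N x z < ρ := by
    intro x hx ρ hρ
    have hx' : x ∈ Set.Icc (0:ℝ) T := Set.Ico_subset_Icc_self hx
    obtain ⟨δ, hδdef⟩ : ∃ d : ℝ, d = (ρ - F x) / 4 := ⟨_, rfl⟩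
    have hδ : 0 < δ := by rw [hδdef]; linarith
    have E1 := negPart_slope_lt s _ x δ hδ (hs x hx')
    have E2 := negPart_slope_lt e _ x δ hδ (he x hx')
    have E3 := negPart_slope_lt i _ x δ hδ (hi x hx')
    have E4 := negPart_slope_lt r _ x δ hδ (hr x hx')
    have hev : ∀ᶠ z in 𝓝[>] x, slope N x z < ρ := by
      filter_upwards [E1, E2, E3, E4] with z h1 h2 h3 h4
      have hsum : slope N x z
          = slope (fun t => max (-s t) 0) x z + slope (fun t => max (-e t) 0) x z
          + slope (fun t => max (-i t) 0) x z + slope (fun t => max (-r t) 0) x z := by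
        rw [hNdef]
        simp only [slope_def_field]
        ring
      have hFx : ρ = F x + 4 * δ := by rw [hδdef]; ring
      have hFx2 : F x
          = (if 0 < s x then 0 else max (-(-β * (1 - lam x) * s x * i x + φ x * δ₁)) 0)
          + (if 0 < e x then 0 else
              max (-(β * (1 - lam x) * s x * i x - ε * e x + φ x * δ₂)) 0)
          + (if 0 < i x then 0 else max (-(ε * e x - γ * i x + φ x * δ₃)) 0)
          + (if 0 < r x then 0 else max (-(γ * i x + φ x * δ₄)) 0) := by rw [hFdef]
      rw [hsum, hFx]
      rw [hFx2] at hρ ⊢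
      linarith
    exact hev.frequently
  -- the key differential inequality for F against N
  have hFN : ∀ x ∈ Set.Icc (0:ℝ) T, F x ≤ K' * N x := by
    intro x hx
    have hsB : |s x| ≤ Cs := hCs x hx
    have hiB : |i x| ≤ Ci := hCi x hx
    have hlB : |1 - lam x| ≤ Cl := hCl x hx
    have hlm : 0 ≤ 1 - lam x := by linarith [hlam1 x hx]
    have hφx : 0 ≤ φ x := hφ0 x hx
    have hsM : |s x| ≤ M := hMdef ▸ hsB.trans (le_max_left _ _)
    have hiM : |i x| ≤ M := hMdef ▸ hiB.trans (le_max_right _ _)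
    have ha0 : 0 ≤ β * (1 - lam x) := mul_nonneg hβ.le hlm
    have haCl : β * (1 - lam x) ≤ β * Cl :=
      mul_le_mul_of_nonneg_left ((le_abs_self _).trans hlB) hβ.le
    have hns0 : (0:ℝ) ≤ max (-s x) 0 := le_max_right _ _
    have hne0 : (0:ℝ) ≤ max (-e x) 0 := le_max_right _ _
    have hni0 : (0:ℝ) ≤ max (-i x) 0 := le_max_right _ _
    have hnr0 : (0:ℝ) ≤ max (-r x) 0 := le_max_right _ _
    -- term 1
    have h1 : (if 0 < s x then 0 else max (-(-β * (1 - lam x) * s x * i x + φ x * δ₁)) 0)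
        ≤ A * max (-s x) 0 := by
      split_ifs with h
      · exact mul_nonneg hA0 hns0
      · push_neg at h
        have hnsv : max (-s x) 0 = -s x := max_eq_left (by linarith)
        have hsi : s x * i x ≤ max (-s x) 0 * M := by
          calc s x * i x ≤ |s x * i x| := le_abs_self _
            _ = |s x| * |i x| := abs_mul _ _
            _ ≤ max (-s x) 0 * M := by
                rw [hnsv, abs_of_nonpos h]
                exact mul_le_mul_of_nonneg_left hiM (by linarith)
        have hab : β * (1 - lam x) * (s x * i x) ≤ β * Cl * (max (-s x) 0 * M) :=
          le_trans (mul_le_mul_of_nonneg_left hsi ha0)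
            (mul_le_mul_of_nonneg_right haCl (mul_nonneg hns0 hM0))
        have hphi : 0 ≤ φ x * δ₁ := mul_nonneg hφx hδ₁
        have key : -(-β * (1 - lam x) * s x * i x + φ x * δ₁) ≤ A * max (-s x) 0 := by
          have hAe : A * max (-s x) 0 = β * Cl * (max (-s x) 0 * M) := by
            rw [hAdef]; ring
          linarith [hab, hphi, hAe]
        exact max_le key (mul_nonneg hA0 hns0)
    -- term 2
    have h2 : (if 0 < e x then 0 else
          max (-(β * (1 - lam x) * s x * i x - ε * e x + φ x * δ₂)) 0)
        ≤ A * max (-s x) 0 + A * max (-i x) 0 + ε * max (-e x) 0 := by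
      split_ifs with h
      · have := mul_nonneg hA0 hns0
        have := mul_nonneg hA0 hni0
        have := mul_nonneg hε.le hne0
        linarith
      · push_neg at h
        have hsi2 : -(s x * i x) ≤ M * max (-s x) 0 + M * max (-i x) 0 :=
          neg_mul_le_aux _ _ _ hsM hiM
        have hB20 : 0 ≤ M * max (-s x) 0 + M * max (-i x) 0 :=
          add_nonneg (mul_nonneg hM0 hns0) (mul_nonneg hM0 hni0)
        have hab2 : β * (1 - lam x) * (-(s x * i x))
            ≤ β * Cl * (M * max (-s x) 0 + M * max (-i x) 0) :=
          le_trans (mul_le_mul_of_nonneg_left hsi2 ha0)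
            (mul_le_mul_of_nonneg_right haCl hB20)
        have hphi2 : 0 ≤ φ x * δ₂ := mul_nonneg hφx hδ₂
        have hee : ε * e x ≤ 0 := mul_nonpos_of_nonneg_of_nonpos hε.le h
        have hene : 0 ≤ ε * max (-e x) 0 := mul_nonneg hε.le hne0
        have key : -(β * (1 - lam x) * s x * i x - ε * e x + φ x * δ₂)
            ≤ A * max (-s x) 0 + A * max (-i x) 0 + ε * max (-e x) 0 := by
          have hAe : A * max (-s x) 0 + A * max (-i x) 0
              = β * Cl * (M * max (-s x) 0 + M * max (-i x) 0) := by
            rw [hAdef]; ring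
          linarith [hab2, hphi2, hee, hene, hAe]
        refine max_le key ?_
        have := mul_nonneg hA0 hns0
        have := mul_nonneg hA0 hni0
        linarith
    -- term 3
    have h3 : (if 0 < i x then 0 else max (-(ε * e x - γ * i x + φ x * δ₃)) 0)
        ≤ ε * max (-e x) 0 + γ * max (-i x) 0 := by
      split_ifs with h
      · have := mul_nonneg hε.le hne0
        have := mul_nonneg hγ.le hni0
        linarith
      · push_neg at h
        have hie : ε * (-e x) ≤ ε * max (-e x) 0 :=
          mul_le_mul_of_nonneg_left (le_max_left _ _) hε.le
        have hgi : γ * i x ≤ 0 := mul_nonpos_of_nonneg_of_nonpos hγ.le h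
        have hphi3 : 0 ≤ φ x * δ₃ := mul_nonneg hφx hδ₃
        have hgni : 0 ≤ γ * max (-i x) 0 := mul_nonneg hγ.le hni0
        have key : -(ε * e x - γ * i x + φ x * δ₃)
            ≤ ε * max (-e x) 0 + γ * max (-i x) 0 := by linarith [hie, hgi, hphi3, hgni]
        refine max_le key ?_
        have := mul_nonneg hε.le hne0
        linarith
    -- term 4
    have h4 : (if 0 < r x then 0 else max (-(γ * i x + φ x * δ₄)) 0)
        ≤ γ * max (-i x) 0 := by
      split_ifs with h
      · exact mul_nonneg hγ.le hni0
      · have hgi : γ * (-i x) ≤ γ * max (-i x) 0 :=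
          mul_le_mul_of_nonneg_left (le_max_left _ _) hγ.le
        have hphi4 : 0 ≤ φ x * δ₄ := mul_nonneg hφx hδ₄
        have key : -(γ * i x + φ x * δ₄) ≤ γ * max (-i x) 0 := by linarith [hgi, hphi4]
        exact max_le key (mul_nonneg hγ.le hni0)
    rw [hFdef, hK'def, hNdef]
    simp only
    have p1 : 0 ≤ (2 * ε + 2 * γ) * max (-s x) 0 := by positivity
    have p2 : 0 ≤ (2 * A + 2 * γ) * max (-e x) 0 := by positivity
    have p3 : 0 ≤ (A + 2 * ε) * max (-i x) 0 := by positivity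
    have p4 : 0 ≤ (2 * A + 2 * ε + 2 * γ) * max (-r x) 0 := by positivity
    linarith [h1, h2, h3, h4, p1, p2, p3, p4]
  -- conclude via the Gronwall-type lemma
  have hNle := gronwall_zero_aux T K' N F hNcont hK'0 hN0 hf' hFN
  intro t ht
  have hNt : N t ≤ 0 := hNle t ht
  have hNt' : max (-s t) 0 + max (-e t) 0 + max (-i t) 0 + max (-r t) 0 ≤ 0 := by
    rw [hNdef] at hNt
    exact hNt
  refine ⟨?_, ?_, ?_, ?_⟩ <;>
    linarith [le_max_left (-s t) 0, le_max_right (-s t) 0,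
      le_max_left (-e t) 0, le_max_right (-e t) 0,
      le_max_left (-i t) 0, le_max_right (-i t) 0,
      le_max_left (-r t) 0, le_max_right (-r t) 0]
end
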